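/- Let C be a triangulated category endowed with a weight structure w. Assume that C admits all small products and that the class C_{w≤0} is closed under small products. Then for every j ∈ ℤ the class C_{w=j} is closed under small products, and any small product of weight decompositions is a weight decomposition: if for each index α one has a distinguished triangle B_α → M_α → A_α → B_α[1] with B_α ∈ C_{w≤0} and A_α ∈ C_{w≥0}[1], then the product triangle ∏B_α → ∏M_α → ∏A_α → (∏B_α)[1] is a distinguished triangle with ∏B_α ∈ C_{w≤0} and ∏A_α ∈ C_{w≥0}[1]. -/

import Mathlib

open CategoryTheory CategoryTheory.Limits CategoryTheory.Pretriangulated CategoryTheory.Category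
open scoped ZeroObject

universe w v u

/-- `X` is a retract of `Y`: the identity of `X` factors through `Y`. -/
def IsRetract {D : Type*} [Category D] (X Y : D) : Prop :=
  ∃ (i : X ⟶ Y) (r : Y ⟶ X), i ≫ r = 𝟙 X

/-- A weight structure on a triangulated category `C`. -/
structure WeightStructure (C : Type u) [Category.{v} C] [Preadditive C] [HasZeroObject C]
    [HasShift C ℤ] [∀ n : ℤ, (shiftFunctor C n).Additive] [Pretriangulated C] where
  /-- the class `C_{w≤0}` -/
  LE : Set C
  /-- the class `C_{w≥0}` -/
  GE : Set C
  le_retract : ∀ ⦃X Y : C⦄, IsRetract X Y → Y ∈ LE → X ∈ LE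
  ge_retract : ∀ ⦃X Y : C⦄, IsRetract X Y → Y ∈ GE → X ∈ GE
  le_shift : ∀ X : C, X ∈ LE → X⟦(-1 : ℤ)⟧ ∈ LE
  ge_shift : ∀ X : C, X ∈ GE → X⟦(1 : ℤ)⟧ ∈ GE
  orthogonal : ∀ ⦃X Y : C⦄, X ∈ LE → Y ∈ GE → ∀ f : X ⟶ Y⟦(1 : ℤ)⟧, f = 0
  exists_decomp : ∀ M : C, ∃ (B A : C) (f : B ⟶ M) (g : M ⟶ A) (h : A ⟶ B⟦(1 : ℤ)⟧),
    B ∈ LE ∧ A⟦(-1 : ℤ)⟧ ∈ GE ∧ Triangle.mk f g h ∈ distTriang C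

namespace WeightStructure

variable {C : Type u} [Category.{v} C] [Preadditive C] [HasZeroObject C]
  [HasShift C ℤ] [∀ n : ℤ, (shiftFunctor C n).Additive] [Pretriangulated C]

/-- the class `C_{w≤i} = C_{w≤0}[i]` -/
def leSet (w : WeightStructure C) (i : ℤ) : Set C := {X : C | X⟦-i⟧ ∈ w.LE}

/-- the class `C_{w≥i} = C_{w≥0}[i]` -/
def geSet (w : WeightStructure C) (i : ℤ) : Set C := {X : C | X⟦-i⟧ ∈ w.GE}

/-- the class `C_{w=i} = C_{w≤i} ∩ C_{w≥i}` -/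
def eqSet (w : WeightStructure C) (i : ℤ) : Set C := w.leSet i ∩ w.geSet i

end WeightStructure

variable {C : Type u} [Category.{v} C] [Preadditive C] [HasZeroObject C]
  [HasShift C ℤ] [∀ n : ℤ, (shiftFunctor C n).Additive] [Pretriangulated C]


section Aux

variable {C : Type u} [Category.{v} C] [Preadditive C] [HasZeroObject C]
  [HasShift C ℤ] [∀ n : ℤ, (shiftFunctor C n).Additive] [Pretriangulated C]

lemma isRetract_of_iso {X Y : C} (e : X ≅ Y) : IsRetract X Y :=
  ⟨e.hom, e.inv, e.hom_inv_id⟩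

lemma isRetract_map {D : Type*} [Category D] (F : C ⥤ D) {X Y : C} (h : IsRetract X Y) :
    IsRetract (F.obj X) (F.obj Y) := by
  obtain ⟨i, r, hir⟩ := h
  exact ⟨F.map i, F.map r, by rw [← F.map_comp, hir, F.map_id]⟩

/-- If every map from an object of `C_{w≤0}` to `Y⟦1⟧` vanishes, then `Y ∈ C_{w≥0}`. -/
lemma ge_of_orthogonal (w : WeightStructure C) (Y : C)
    (h : ∀ X, X ∈ w.LE → ∀ f : X ⟶ Y⟦(1 : ℤ)⟧, f = 0) : Y ∈ w.GE := by
  obtain ⟨B, A, f, g, d, hB, hA, hT⟩ := w.exists_decomp (Y⟦(1 : ℤ)⟧)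
  have hf : f = 0 := h B hB f
  obtain ⟨r, hr⟩ := Triangle.yoneda_exact₂ _ hT (𝟙 (Y⟦(1 : ℤ)⟧))
    (by rw [Triangle.mk_mor₁, hf]; exact zero_comp)
  have h1 : IsRetract (Y⟦(1 : ℤ)⟧) A := ⟨g, r, hr.symm⟩
  have h2 : (Y⟦(1 : ℤ)⟧)⟦(-1 : ℤ)⟧ ∈ w.GE :=
    w.ge_retract (isRetract_map (shiftFunctor C (-1 : ℤ)) h1) hA
  exact w.ge_retract
    (isRetract_of_iso ((shiftFunctorCompIsoId C (1 : ℤ) (-1 : ℤ) (by omega)).symm.app Y)) h2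

/-- `C_{w≥0}` is closed under small products. -/
lemma ge_prod (w : WeightStructure C) [HasProducts.{w} C] (J : Type w) (Y : J → C)
    (h : ∀ a, Y a ∈ w.GE) : (∏ᶜ Y) ∈ w.GE := by
  apply ge_of_orthogonal
  intro X hX φ
  have : IsIso (piComparison (shiftFunctor C (1 : ℤ)) Y) := inferInstance
  rw [← cancel_mono (piComparison (shiftFunctor C (1 : ℤ)) Y)]
  apply Limits.Pi.hom_ext
  intro j
  simp only [zero_comp, assoc, piComparison_comp_π]
  exact w.orthogonal hX (h j) _

end Aux

/-- Proposition 2.1.3(18): if `C` admits all small products and `C_{w≤0}` is closed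
under small products, then every `C_{w=j}` is closed under small products, and small
products of weight decompositions are weight decompositions. -/
theorem products_of_weight_decompositions (w : WeightStructure C)
    [HasProducts.{w} C]
    (hLE : ∀ (J : Type w) (X : J → C), (∀ j, X j ∈ w.LE) → (∏ᶜ X) ∈ w.LE) :
    (∀ (j : ℤ) (J : Type w) (X : J → C), (∀ a, X a ∈ w.eqSet j) → (∏ᶜ X) ∈ w.eqSet j) ∧
    (∀ (J : Type w) (B A M : J → C)
      (f : ∀ a : J, B a ⟶ M a) (g : ∀ a : J, M a ⟶ A a)
      (d : ∀ a : J, A a ⟶ (B a)⟦(1 : ℤ)⟧),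
      (∀ a, B a ∈ w.LE) → (∀ a, (A a)⟦(-1 : ℤ)⟧ ∈ w.GE) →
      (∀ a, Triangle.mk (f a) (g a) (d a) ∈ (distTriang C)) →
      ((∏ᶜ B) ∈ w.LE ∧ (∏ᶜ A)⟦(-1 : ℤ)⟧ ∈ w.GE ∧
        ∃ dd : (∏ᶜ A) ⟶ (∏ᶜ B)⟦(1 : ℤ)⟧,
          (∀ a : J, dd ≫ (shiftFunctor C (1 : ℤ)).map (Limits.Pi.π B a) = Limits.Pi.π A a ≫ d a) ∧
          Triangle.mk (Limits.Pi.map f) (Limits.Pi.map g) dd ∈ (distTriang C))) := by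
  constructor
  · intro j J X hX
    have e : IsIso (piComparison (shiftFunctor C (-j)) X) := inferInstance
    have hretr : IsRetract ((∏ᶜ X)⟦-j⟧) (∏ᶜ (fun a => (X a)⟦-j⟧)) :=
      isRetract_of_iso (asIso (piComparison (shiftFunctor C (-j)) X))
    constructor
    · exact w.le_retract hretr (hLE J _ (fun a => (hX a).1))
    · exact w.ge_retract hretr (ge_prod w J _ (fun a => (hX a).2))
  · intro J B A M f g d hB hA hT
    refine ⟨hLE J B hB, ?_, ?_⟩
    · -- (∏ᶜ A)⟦-1⟧ ∈ GE
      apply ge_of_orthogonal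
      intro X hX φ
      have : IsIso (piComparison (shiftFunctor C (1 : ℤ)) (fun a => (A a)⟦(-1 : ℤ)⟧)) :=
        inferInstance
      -- φ : X ⟶ ((∏ᶜ A)⟦-1⟧)⟦1⟧
      have e : ((∏ᶜ A)⟦(-1 : ℤ)⟧)⟦(1 : ℤ)⟧ ≅ ∏ᶜ (fun a => ((A a)⟦(-1 : ℤ)⟧)⟦(1 : ℤ)⟧) := by
        refine (shiftFunctor C (1 : ℤ)).mapIso ?_ ≪≫
          asIso (piComparison (shiftFunctor C (1 : ℤ)) (fun a => (A a)⟦(-1 : ℤ)⟧))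
        exact (asIso (piComparison (shiftFunctor C (-1 : ℤ)) A))
      rw [← cancel_mono e.hom]
      apply Limits.Pi.hom_ext
      intro j
      simp only [zero_comp, assoc]
      exact w.orthogonal hX (hA j) _
    · let T : J → Triangle C := fun a => Triangle.mk (f a) (g a) (d a)
      have hdist : productTriangle T ∈ distTriang C :=
        productTriangle_distinguished T hT
      refine ⟨(productTriangle T).mor₃, ?_, ?_⟩
      · intro a
        exact (productTriangle.π T a).comm₃
      · exact hdist
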